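/- There exists R₀ > 1 such that for all R > R₀: for every w ∈ K⁻ the backward orbit is bounded, i.e. sup_{n ≥ 0} ‖H⁻ⁿ(w)‖ < ∞. -/

import Mathlib

open Complex Filter Topology

/-- The quadratic automorphism `H(x,y,z) = (xy + az, x² + by, x)` of `ℂ³`. -/
noncomputable def H (a b : ℂ) (w : ℂ × ℂ × ℂ) : ℂ × ℂ × ℂ :=
  (w.1 * w.2.1 + a * w.2.2, w.1 ^ 2 + b * w.2.1, w.1)

/-- The inverse automorphism
`H⁻¹(x,y,z) = (z, (y − z²)/b, (x − z(y − z²)/b)/a)`. -/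
noncomputable def Hinv (a b : ℂ) (w : ℂ × ℂ × ℂ) : ℂ × ℂ × ℂ :=
  (w.2.2, (w.2.1 - w.2.2 ^ 2) / b,
    (w.1 - w.2.2 * ((w.2.1 - w.2.2 ^ 2) / b)) / a)

/-- `V⁺ = {(x,y,z) : |z| > max{R, |x|, (1+δ)|y|^{1/2}}}`. -/
def Vplus (δ R : ℝ) : Set (ℂ × ℂ × ℂ) :=
  {w | ‖w.2.2‖ >
    max R (max (‖w.1‖) ((1 + δ) * Real.sqrt (‖w.2.1‖)))}

/-- `U⁻ = ⋃_{n≥0} Hⁿ(V⁺)`. -/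
noncomputable def Uminus (a b : ℂ) (δ R : ℝ) : Set (ℂ × ℂ × ℂ) :=
  ⋃ n : ℕ, (H a b)^[n] '' Vplus δ R

/-- `K⁻ = ℂ³ \ U⁻`. -/
noncomputable def Kminus (a b : ℂ) (δ R : ℝ) : Set (ℂ × ℂ × ℂ) :=
  (Uminus a b δ R)ᶜ

/-- there exists `R₀ > 1` such that for all `R > R₀`: for every
`w ∈ K⁻` the backward orbit is bounded: `sup_{n≥0} ‖H⁻ⁿ(w)‖ < ∞`. -/
theorem stmt5 (a b : ℂ) (ha : a ≠ 0) (hb : b ≠ 0) (δ : ℝ) (hδ : 0 < δ)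
    (hbδ : ‖b‖ = 1 + δ) :
    ∃ R₀ > (1 : ℝ), ∀ R > R₀, ∀ w ∈ Kminus a b δ R,
      ∃ B : ℝ, ∀ n : ℕ, ‖(Hinv a b)^[n] w‖ ≤ B := by
  refine ⟨2, one_lt_two, ?_⟩
  intro R hR w hw
  have hR0 : (0 : ℝ) < R := by linarith
  set β : ℝ := 1 + δ with hβdef
  have hβ1 : 1 < β := by simp only [hβdef]; linarith
  have hβ0 : 0 < β := by linarith
  set A : ℝ := ‖a‖ with hAdef
  have hA0 : 0 ≤ A := norm_nonneg a
  have hsδ : 0 < Real.sqrt δ := Real.sqrt_pos.2 hδ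
  set T : ℝ := β * (1 + A) / Real.sqrt δ + 1 with hTdef
  have hT0 : 0 < T := by
    have h : 0 ≤ β * (1 + A) / Real.sqrt δ := by positivity
    rw [hTdef]
    linarith
  set C : ℝ := max R (β * Real.sqrt T) with hCdef
  have hRC : R ≤ C := le_max_left _ _
  have hCT : β * Real.sqrt T ≤ C := le_max_right _ _
  -- H is a left inverse of Hinv
  have hLI : Function.LeftInverse (H a b) (Hinv a b) := by
    intro p
    obtain ⟨x, y, z⟩ := p
    simp only [H, Hinv, Prod.mk.injEq]
    refine ⟨?_, ?_, trivial⟩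
    · field_simp
      ring
    · field_simp
      ring
  set v : ℕ → ℂ × ℂ × ℂ := fun n => (Hinv a b)^[n] w with hvdef
  have hnot : ∀ n, v n ∉ Vplus δ R := by
    intro n hn
    simp only [Kminus, Uminus, Set.mem_compl_iff, Set.mem_iUnion] at hw
    exact hw ⟨n, v n, hn, hLI.iterate n w⟩
  set X : ℕ → ℝ := fun n => ‖(v n).1‖ with hXdef
  set Y : ℕ → ℝ := fun n => ‖(v n).2.1‖ with hYdef
  set Z : ℕ → ℝ := fun n => ‖(v n).2.2‖ with hZdef
  have hX0 : ∀ n, 0 ≤ X n := fun n => norm_nonneg _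
  have hY0 : ∀ n, 0 ≤ Y n := fun n => norm_nonneg _
  have hZ0 : ∀ n, 0 ≤ Z n := fun n => norm_nonneg _
  -- basic recurrences
  have hsucc : ∀ n, v (n + 1) = Hinv a b (v n) := by
    intro n
    simp only [hvdef, Function.iterate_succ_apply']
  have rel1 : ∀ n, Z n ≤ max R (max (X n) (β * Real.sqrt (Y n))) := by
    intro n
    have := hnot n
    simp only [Vplus, Set.mem_setOf_eq, not_lt] at this
    exact this
  have relX : ∀ n, X (n + 1) = Z n := by
    intro n
    simp only [hXdef, hZdef, hsucc n, Hinv]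
  have relYc : ∀ n, b * (v (n + 1)).2.1 = (v n).2.1 - (v n).2.2 ^ 2 := by
    intro n
    rw [hsucc n]
    simp only [Hinv]
    rw [mul_comm, div_mul_cancel₀ _ hb]
  have relZc : ∀ n, (v n).2.2 * (v (n + 1)).2.1 = (v n).1 - a * (v (n + 1)).2.2 := by
    intro n
    rw [hsucc n]
    simp only [Hinv]
    rw [mul_comm a, div_mul_cancel₀ _ ha]
    ring
  have htri : ∀ p q : ℂ, ‖p - q‖ ≤ ‖p‖ + ‖q‖ := by
    intro p q
    simpa [sub_eq_add_neg] using norm_add_le p (-q)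
  have rel2 : ∀ n, β * Y (n + 1) ≤ Y n + (Z n) ^ 2 := by
    intro n
    have h1 : ‖b * (v (n + 1)).2.1‖ = β * Y (n + 1) := by
      rw [norm_mul, hbδ]
    have h2 := htri (v n).2.1 ((v n).2.2 ^ 2)
    rw [norm_pow] at h2
    rw [← h1, relYc n]
    exact h2
  have rel3 : ∀ n, Z n * Y (n + 1) ≤ X n + A * Z (n + 1) := by
    intro n
    have h1 : ‖(v n).2.2 * (v (n + 1)).2.1‖ = Z n * Y (n + 1) := norm_mul _ _
    have h2 := htri (v n).1 (a * (v (n + 1)).2.2)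
    rw [norm_mul] at h2
    rw [← h1, relZc n]
    exact h2
  clear_value X Y Z
  -- the Lyapunov-type quantity
  set M : ℕ → ℝ := fun n => max C (max (X n) (β * Real.sqrt (Y n))) with hMdef
  have hCM : ∀ n, C ≤ M n := fun n => le_max_left _ _
  have hXM : ∀ n, X n ≤ M n := fun n => (le_max_left _ _).trans (le_max_right _ _)
  have hYM : ∀ n, β * Real.sqrt (Y n) ≤ M n :=
    fun n => (le_max_right _ _).trans (le_max_right _ _)
  have hM0 : ∀ n, 0 < M n := fun n => lt_of_lt_of_le hR0 (hRC.trans (hCM n))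
  have hZM : ∀ n, Z n ≤ M n := by
    intro n
    exact (rel1 n).trans (max_le (hRC.trans (hCM n)) (max_le (hXM n) (hYM n)))
  have key : ∀ n, M (n + 1) ≤ M n := by
    intro n
    refine max_le (hCM n) (max_le ?_ ?_)
    · rw [relX n]; exact hZM n
    · by_contra h
      push_neg at h
      set s : ℝ := Real.sqrt (Y (n + 1)) with hs
      have hs0' : 0 ≤ s := Real.sqrt_nonneg _
      have hMs : M n < β * s := h
      have hss : M n / β < s := by
        rw [div_lt_iff₀ hβ0]
        linarith [mul_comm β s]
      have hs0 : 0 < s := lt_of_le_of_lt (by positivity) hss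
      have hsq : s ^ 2 = Y (n + 1) := Real.sq_sqrt (hY0 (n + 1))
      have hy1 : (M n / β) ^ 2 < Y (n + 1) := by
        rw [← hsq]
        have hMβ : 0 ≤ M n / β := by positivity
        nlinarith
      have hy0 : Y n ≤ (M n / β) ^ 2 := by
        have h1 : Real.sqrt (Y n) ≤ M n / β := by
          rw [le_div_iff₀ hβ0]
          linarith [mul_comm (Real.sqrt (Y n)) β, hYM n]
        have h2 : Real.sqrt (Y n) ^ 2 = Y n := Real.sq_sqrt (hY0 n)
        nlinarith [Real.sqrt_nonneg (Y n)]
      have hz0 : δ * Y (n + 1) < (Z n) ^ 2 := by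
        have := rel2 n
        have hβe : β = 1 + δ := hβdef
        nlinarith
      have hz0' : Real.sqrt δ * s ≤ Z n := by
        have h1 : Real.sqrt (δ * Y (n + 1)) ≤ Real.sqrt ((Z n) ^ 2) :=
          Real.sqrt_le_sqrt hz0.le
        rwa [Real.sqrt_mul hδ.le, Real.sqrt_sq (hZ0 n), ← hs] at h1
      have hz1 : Z (n + 1) ≤ β * s := by
        have h1 := rel1 (n + 1)
        have h2 : X (n + 1) = Z n := relX n
        refine h1.trans (max_le ?_ (max_le ?_ le_rfl))
        · linarith [hRC.trans (hCM n)]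
        · rw [h2]; linarith [hZM n]
      have hfin : Real.sqrt δ * s * Y (n + 1) ≤ M n + A * (β * s) := by
        calc Real.sqrt δ * s * Y (n + 1) ≤ Z n * Y (n + 1) :=
              mul_le_mul_of_nonneg_right hz0' (hY0 (n + 1))
          _ ≤ X n + A * Z (n + 1) := rel3 n
          _ ≤ M n + A * (β * s) := by
              have := mul_le_mul_of_nonneg_left hz1 hA0
              linarith [hXM n]
      have hy1T : Real.sqrt δ * Y (n + 1) ≤ β * (1 + A) := by
        have e1 : β * (1 + A) * s = β * s + A * (β * s) := by ring
        have h1 : Real.sqrt δ * s * Y (n + 1) ≤ β * (1 + A) * s := by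
          rw [e1]; linarith
        have e2 : (Real.sqrt δ * Y (n + 1)) * s = Real.sqrt δ * s * Y (n + 1) := by ring
        have h2 : (Real.sqrt δ * Y (n + 1)) * s ≤ (β * (1 + A)) * s := by
          rw [e2]; exact h1
        exact le_of_mul_le_mul_right h2 hs0
      have hy1T' : Y (n + 1) ≤ β * (1 + A) / Real.sqrt δ := by
        rw [le_div_iff₀ hsδ]
        linarith [mul_comm (Y (n + 1)) (Real.sqrt δ)]
      -- but Y (n+1) > (M n / β)^2 ≥ (C / β)^2 ≥ T
      have hCb : Real.sqrt T ≤ C / β := by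
        rw [le_div_iff₀ hβ0]
        linarith [mul_comm (Real.sqrt T) β]
      have hT2 : T ≤ (C / β) ^ 2 := by
        have h1 := pow_le_pow_left₀ (Real.sqrt_nonneg T) hCb 2
        rwa [Real.sq_sqrt hT0.le] at h1
      have hCM2 : (C / β) ^ 2 ≤ (M n / β) ^ 2 := by
        have h1 : C / β ≤ M n / β := by gcongr; exact hCM n
        have h2 : 0 ≤ C / β := by
          have hc : 0 < C := lt_of_lt_of_le hR0 hRC
          positivity
        exact pow_le_pow_left₀ h2 h1 2
      linarith [hy1, hT2, hCM2, hy1T']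
  have mono : ∀ n, M n ≤ M 0 := by
    intro n
    induction n with
    | zero => exact le_rfl
    | succ k ih => exact (key k).trans ih
  refine ⟨max (M 0) ((M 0) ^ 2), ?_⟩
  intro n
  have hXn : X n ≤ M 0 := (hXM n).trans (mono n)
  have hZn : Z n ≤ M 0 := (hZM n).trans (mono n)
  have hYn : Y n ≤ (M 0) ^ 2 := by
    have h0 : 0 ≤ Real.sqrt (Y n) := Real.sqrt_nonneg (Y n)
    have h1 : Real.sqrt (Y n) ≤ M n :=
      le_trans (le_mul_of_one_le_left h0 hβ1.le) (hYM n)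
    have h3 : Real.sqrt (Y n) ^ 2 ≤ (M n) ^ 2 := pow_le_pow_left₀ h0 h1 2
    have h4 : (M n) ^ 2 ≤ (M 0) ^ 2 := pow_le_pow_left₀ (hM0 n).le (mono n) 2
    rw [Real.sq_sqrt (hY0 n)] at h3
    linarith
  have hnorm : ‖(Hinv a b)^[n] w‖ = max (X n) (max (Y n) (Z n)) := by
    show ‖v n‖ = _
    rw [Prod.norm_def, Prod.norm_def]
    simp only [hXdef, hYdef, hZdef]
  rw [hnorm]
  exact max_le (le_max_of_le_left hXn)
    (max_le (le_max_of_le_right hYn) (le_max_of_le_left hZn))
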